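/- Under the polar decomposition hypothesis, the normalizer of K in G decomposes as N_G(K) = (T ∩ N_G(K))·K, i.e. every element of N_G(K) is a product of an element of T ∩ N_G(K) and an element of K. -/

import Mathlib

/-- The subgroup of fixed points of an automorphism `σ` of a group `G`. -/
def fixSubgroup {G : Type*} [Group G] (σ : G ≃* G) : Subgroup G where
  carrier := {g : G | σ g = g}
  one_mem' := map_one σ
  mul_mem' := by
    intro a b ha hb
    simp only [Set.mem_setOf_eq] at *
    rw [map_mul, ha, hb]
  inv_mem' := by
    intro a ha
    simp only [Set.mem_setOf_eq] at *
    rw [map_inv, ha]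

/-- Under the polar decomposition `G = KTK` (with `K = fix(σ)`, `T` abelian and
inverted by `σ`), the normalizer of `K` decomposes as `N_G(K) = (T ∩ N_G(K))·K`. -/
theorem normalizer_polar_decomposition {G : Type*} [Group G]
    (σ : G ≃* G) (hσ : ∀ g, σ (σ g) = g)
    (T : Subgroup G) (hTcomm : ∀ a ∈ T, ∀ b ∈ T, a * b = b * a)
    (hσT : ∀ t ∈ T, σ t = t⁻¹)
    (polar : ∀ g : G, ∃ k ∈ fixSubgroup σ, ∃ t ∈ T, ∃ l ∈ fixSubgroup σ,
      g = k * t * l) :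
    ∀ n ∈ Subgroup.normalizer (fixSubgroup σ : Set G),
      ∃ t ∈ T ⊓ Subgroup.normalizer (fixSubgroup σ : Set G), ∃ k ∈ fixSubgroup σ, n = t * k := by
  intro n hn
  obtain ⟨k, hk, t, htT, l, hl, hn_eq⟩ := polar n
  have hkN : k ∈ Subgroup.normalizer (fixSubgroup σ : Set G) := Subgroup.le_normalizer hk
  have hlN : l ∈ Subgroup.normalizer (fixSubgroup σ : Set G) := Subgroup.le_normalizer hl
  have htN : t ∈ Subgroup.normalizer (fixSubgroup σ : Set G) := by
    have : t = k⁻¹ * n * l⁻¹ := by rw [hn_eq]; group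
    rw [this]
    exact mul_mem (mul_mem (inv_mem hkN) hn) (inv_mem hlN)
  refine ⟨t, ⟨htT, htN⟩, (t⁻¹ * k * t) * l, mul_mem ?_ hl, by rw [hn_eq]; group⟩
  have := (Subgroup.mem_normalizer_iff.mp (inv_mem htN) k).mp hk
  simpa [mul_assoc] using this
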